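/- Let M > 0 and α ≥ 0. Let f = h + conj(g) where h and g are analytic on the unit disc D with expansions h(z) = z + ∑_{n=2}^∞ aₙzⁿ and g(z) = ∑_{n=2}^∞ bₙzⁿ, suppose |f(z)| < M for all z ∈ D, and suppose the coefficients satisfy |aₙ| + |bₙ| ≤ 2/(1 + (n − 1)α) for all n ≥ 2. Let ρ₃ ∈ (0, 1) be a root of the equation π/(4M) − ∑_{n=2}^∞ 2n·r^{n−1}/(1 + (n − 1)α) = 0. Then f is univalent (injective) on the disc D_{ρ₃}. -/

import Mathlib

open MeasureTheory Complex intervalIntegral Set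

lemma circle_exp_int (k : ℤ) (hk : k ≠ 0) :
    ∫ θ : ℝ in (0:ℝ)..(2*Real.pi), Complex.exp ((k:ℂ) * Complex.I * θ) = 0 := by
  have hc : ((k:ℂ) * Complex.I) ≠ 0 :=
    mul_ne_zero (Int.cast_ne_zero.mpr hk) Complex.I_ne_zero
  rw [integral_exp_mul_complex hc]
  have h1 : (k:ℂ) * Complex.I * ((2*Real.pi : ℝ) : ℂ) = (k:ℂ) * (2*Real.pi*Complex.I) := by
    push_cast; ring
  rw [h1, Complex.exp_int_mul_two_pi_mul_I, Complex.ofReal_zero, mul_zero, Complex.exp_zero,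
    sub_self, zero_div]

lemma pow_sub_pow_norm_le (z w : ℂ) (t : ℝ) (hz : ‖z‖ ≤ t) (hw : ‖w‖ ≤ t)
    (m : ℕ) : ‖z ^ m - w ^ m‖ ≤ m * t ^ (m - 1) * ‖z - w‖ := by
  have ht : 0 ≤ t := le_trans (norm_nonneg z) hz
  rw [← geom_sum₂_mul z w m, norm_mul]
  gcongr
  calc ‖∑ i ∈ Finset.range m, z ^ i * w ^ (m - 1 - i)‖
      ≤ ∑ i ∈ Finset.range m, ‖z ^ i * w ^ (m - 1 - i)‖ := by
        exact (norm_sum_le _ _)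
    _ ≤ ∑ i ∈ Finset.range m, t ^ (m - 1) := by
        apply Finset.sum_le_sum
        intro i hi
        rw [norm_mul, norm_pow, norm_pow]
        calc ‖z‖ ^ i * ‖w‖ ^ (m - 1 - i)
            ≤ t ^ i * t ^ (m - 1 - i) := by gcongr
          _ = t ^ (i + (m - 1 - i)) := (pow_add t i _).symm
          _ = t ^ (m - 1) := by
              congr 1
              have := Finset.mem_range.mp hi
              omega
    _ = m * t ^ (m - 1) := by rw [Finset.sum_const, Finset.card_range, nsmul_eq_mul]

lemma M_ge_one (M : ℝ) (hM : 0 < M) (h g : ℂ → ℂ) (a b : ℕ → ℂ)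
    (hhsum : ∀ z ∈ Metric.ball (0:ℂ) 1, HasSum (fun n : ℕ => a n * z ^ n) (h z))
    (hgsum : ∀ z ∈ Metric.ball (0:ℂ) 1, HasSum (fun n : ℕ => b n * z ^ n) (g z))
    (ha1 : a 1 = 1) (hb1 : b 1 = 0)
    (hcb : ∀ n : ℕ, ‖a n‖ + ‖b n‖ ≤ 2)
    (hbound : ∀ z ∈ Metric.ball (0:ℂ) 1,
      ‖h z + starRingEnd ℂ (g z)‖ < M) : (1:ℝ) ≤ M := by
  have pi_pos := Real.pi_pos
  suffices H : ∀ r : ℝ, r ∈ Set.Ioo (0:ℝ) 1 → r ≤ M by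
    by_contra hlt
    push_neg at hlt
    have h1 : (M + 1) / 2 ∈ Set.Ioo (0:ℝ) 1 := ⟨by linarith, by linarith⟩
    have := H _ h1
    linarith
  intro r hr
  obtain ⟨hr0, hr1⟩ := hr
  set tp : ℝ := 2 * Real.pi with htp
  have htp0 : 0 ≤ tp := by positivity
  set z : ℝ → ℂ := fun θ => (r : ℂ) * Complex.exp ((θ:ℂ) * Complex.I) with hzdef
  have hzmem : ∀ θ : ℝ, z θ ∈ Metric.ball (0:ℂ) 1 := by
    intro θ
    simp only [Metric.mem_ball, dist_zero_right, hzdef, norm_mul,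
      Complex.norm_real, Real.norm_eq_abs, Complex.norm_exp_ofReal_mul_I, mul_one, abs_of_pos hr0]
    exact hr1
  have hzabs : ∀ θ : ℝ, ‖z θ‖ = r := by
    intro θ
    simp [hzdef, Complex.norm_exp_ofReal_mul_I, abs_of_pos hr0]
  set e : ℝ → ℂ := fun θ => Complex.exp (-(θ:ℂ) * Complex.I) with hedef
  have heabs : ∀ θ : ℝ, ‖e θ‖ = 1 := by
    intro θ
    simp [hedef, Complex.norm_exp]
  set F : ℕ → ℝ → ℂ :=
    fun n θ => (a n * (z θ) ^ n + (starRingEnd ℂ) (b n * (z θ) ^ n)) * e θ with hFdef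
  -- pointwise sum
  have hFsum : ∀ θ : ℝ, HasSum (fun n => F n θ)
      ((h (z θ) + (starRingEnd ℂ) (g (z θ))) * e θ) := by
    intro θ
    have h1 := hhsum (z θ) (hzmem θ)
    have h2 := (hgsum (z θ) (hzmem θ)).map (starRingEnd ℂ) continuous_star
    exact (h1.add h2).mul_right (e θ)
  -- norms
  have hFnorm : ∀ n θ, ‖F n θ‖ ≤ (‖a n‖ + ‖b n‖) * r ^ n := by
    intro n θ
    have h1 : ‖F n θ‖ = ‖a n * (z θ) ^ n + (starRingEnd ℂ) (b n * (z θ) ^ n)‖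
        * ‖e θ‖ := by
      simp [hFdef, map_mul]
    rw [h1, heabs θ, mul_one]
    calc ‖a n * (z θ) ^ n + (starRingEnd ℂ) (b n * (z θ) ^ n)‖
        ≤ ‖a n * (z θ) ^ n‖ + ‖(starRingEnd ℂ) (b n * (z θ) ^ n)‖ :=
          norm_add_le _ _
      _ = ‖a n‖ * r ^ n + ‖b n‖ * r ^ n := by
          simp [map_mul, map_pow, hzabs θ]
      _ = (‖a n‖ + ‖b n‖) * r ^ n := by ring
  -- continuity & integrability
  have hFcont : ∀ n, Continuous (F n) := by
    intro n
    apply Continuous.mul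
    · apply Continuous.add
      · exact continuous_const.mul ((continuous_const.mul
          ((Complex.continuous_ofReal.mul continuous_const).cexp)).pow n)
      · exact continuous_star.comp (continuous_const.mul ((continuous_const.mul
          ((Complex.continuous_ofReal.mul continuous_const).cexp)).pow n))
    · exact ((Complex.continuous_ofReal.neg.mul continuous_const)).cexp
  have hFint : ∀ n, IntegrableOn (F n) (Set.Ioc 0 tp) volume := by
    intro n
    exact (hFcont n).integrableOn_Ioc
  have hIocvol : (volume (Set.Ioc (0:ℝ) tp)).toReal = tp := by
    rw [Real.volume_Ioc, sub_zero, ENNReal.toReal_ofReal htp0]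
  -- integral norm bound and summability
  have hnormint : ∀ n, ∫ θ in Set.Ioc 0 tp, ‖F n θ‖ ≤ tp * (2 * r ^ n) := by
    intro n
    calc ∫ θ in Set.Ioc 0 tp, ‖F n θ‖
        ≤ ∫ _θ in Set.Ioc 0 tp, ((‖a n‖ + ‖b n‖) * r ^ n) := by
          apply setIntegral_mono_on ((hFint n).norm) ((integrableOn_const_iff).mpr _)
            measurableSet_Ioc (fun θ _ => hFnorm n θ)
          right
          rw [Real.volume_Ioc]
          exact ENNReal.ofReal_lt_top
      _ = tp * ((‖a n‖ + ‖b n‖) * r ^ n) := by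
          rw [setIntegral_const, smul_eq_mul, measureReal_def, hIocvol]
      _ ≤ tp * (2 * r ^ n) := by
          apply mul_le_mul_of_nonneg_left _ htp0
          apply mul_le_mul_of_nonneg_right (hcb n) (pow_nonneg hr0.le n)
  have hsumnorm : Summable (fun n => ∫ θ in Set.Ioc 0 tp, ‖F n θ‖) := by
    apply Summable.of_nonneg_of_le
      (fun n => integral_nonneg (fun θ => norm_nonneg _)) hnormint
    apply Summable.mul_left
    exact (summable_geometric_of_lt_one hr0.le hr1).mul_left 2
  have Hsw := hasSum_integral_of_summable_integral_norm (μ := volume.restrict (Set.Ioc 0 tp))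
    (F := F) (fun n => hFint n) hsumnorm
  -- compute each integral
  have hval : ∀ n : ℕ, (∫ θ in Set.Ioc 0 tp, F n θ) =
      if n = 1 then ((tp * r : ℝ) : ℂ) else 0 := by
    intro n
    rcases eq_or_ne n 1 with rfl | hn
    · simp only [if_pos rfl]
      have : ∀ θ : ℝ, F 1 θ = ((r:ℝ):ℂ) := by
        intro θ
        simp only [hFdef, ha1, hb1, pow_one, one_mul, zero_mul, map_zero, add_zero,
          hzdef, hedef]
        rw [mul_assoc, ← Complex.exp_add]
        norm_num
      rw [setIntegral_congr_fun measurableSet_Ioc (fun θ _ => this θ),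
        setIntegral_const, measureReal_def, hIocvol]
      rw [Complex.real_smul]
      push_cast
      ring
    · rw [if_neg hn]
      have hrw : ∀ θ : ℝ, F n θ =
          (a n * (r:ℂ)^n) * Complex.exp ((((n:ℤ) - 1 : ℤ):ℂ) * Complex.I * θ)
          + ((starRingEnd ℂ) (b n) * (r:ℂ)^n)
            * Complex.exp (((-((n:ℤ) + 1) : ℤ):ℂ) * Complex.I * θ) := by
        intro θ
        have cexp_conj : (starRingEnd ℂ) (Complex.exp ((θ:ℂ) * Complex.I))
            = Complex.exp (-((θ:ℂ) * Complex.I)) := by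
          rw [← Complex.exp_conj]
          congr 1
          simp [map_mul, Complex.conj_ofReal, Complex.conj_I, mul_neg]
        have E1 : Complex.exp ((θ:ℂ) * Complex.I) ^ n * Complex.exp (-(θ:ℂ) * Complex.I)
            = Complex.exp ((((n:ℤ) - 1 : ℤ):ℂ) * Complex.I * θ) := by
          rw [← Complex.exp_nat_mul, ← Complex.exp_add]
          congr 1
          push_cast
          ring
        have E2 : Complex.exp (-((θ:ℂ) * Complex.I)) ^ n * Complex.exp (-(θ:ℂ) * Complex.I)
            = Complex.exp (((-((n:ℤ) + 1) : ℤ):ℂ) * Complex.I * θ) := by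
          rw [← Complex.exp_nat_mul, ← Complex.exp_add]
          congr 1
          push_cast
          ring
        simp only [hFdef, hzdef, hedef]
        rw [map_mul, map_pow, map_mul, Complex.conj_ofReal, cexp_conj, mul_pow, mul_pow]
        linear_combination (a n * (r:ℂ)^n) * E1 + ((starRingEnd ℂ) (b n) * (r:ℂ)^n) * E2
      rw [setIntegral_congr_fun measurableSet_Ioc (fun θ _ => hrw θ)]
      have c1 : Continuous fun θ : ℝ =>
          Complex.exp ((((n:ℤ) - 1 : ℤ):ℂ) * Complex.I * θ) :=
        (continuous_const.mul Complex.continuous_ofReal).cexp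
      have c2 : Continuous fun θ : ℝ =>
          Complex.exp (((-((n:ℤ) + 1) : ℤ):ℂ) * Complex.I * θ) :=
        (continuous_const.mul Complex.continuous_ofReal).cexp
      rw [integral_add (f := fun θ : ℝ => a n * (r:ℂ)^n * Complex.exp ((((n:ℤ) - 1 : ℤ):ℂ) * Complex.I * θ))
        (g := fun θ : ℝ => (starRingEnd ℂ) (b n) * (r:ℂ)^n * Complex.exp (((-((n:ℤ) + 1) : ℤ):ℂ) * Complex.I * θ))
        ((continuous_const.mul c1).integrableOn_Ioc) ((continuous_const.mul c2).integrableOn_Ioc)]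
      rw [MeasureTheory.integral_const_mul, MeasureTheory.integral_const_mul]
      rw [← intervalIntegral.integral_of_le htp0, ← intervalIntegral.integral_of_le htp0]
      rw [circle_exp_int _ (by omega : ((n:ℤ) - 1) ≠ 0),
        circle_exp_int _ (by omega : (-((n:ℤ) + 1)) ≠ 0)]
      simp
  -- identify the sum
  have h2 : HasSum (fun n : ℕ => if n = 1 then ((tp * r : ℝ) : ℂ) else 0) ((tp * r : ℝ) : ℂ) :=
    hasSum_ite_eq 1 _
  have hIeq : (∫ θ in Set.Ioc 0 tp, ∑' n, F n θ) = ((tp * r : ℝ) : ℂ) := by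
    have := Hsw
    simp only [hval] at this
    exact HasSum.unique this h2
  have hIeq2 : (∫ θ in Set.Ioc 0 tp,
      (h (z θ) + (starRingEnd ℂ) (g (z θ))) * e θ) = ((tp * r : ℝ) : ℂ) := by
    rw [← hIeq]
    apply setIntegral_congr_fun measurableSet_Ioc
    intro θ _
    exact ((hFsum θ).tsum_eq).symm
  -- final bound
  have hb : ‖∫ θ in Set.Ioc 0 tp, (h (z θ) + (starRingEnd ℂ) (g (z θ))) * e θ‖
      ≤ M * (volume (Set.Ioc (0:ℝ) tp)).toReal := by
    apply norm_setIntegral_le_of_norm_le_const_ae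
    · rw [Real.volume_Ioc]; exact ENNReal.ofReal_lt_top
    · apply ae_of_all
      intro θ
      rw [norm_mul, heabs θ, mul_one]
      exact (hbound (z θ) (hzmem θ)).le
  rw [hIeq2, hIocvol] at hb
  have h3 : tp * r ≤ M * tp := by
    rw [Complex.norm_real, Real.norm_eq_abs,
      _root_.abs_of_nonneg (by positivity : (0:ℝ) ≤ tp * r)] at hb
    exact hb
  have htp' : 0 < tp := by positivity
  nlinarith



/-- Landau-type theorem (univalence) under the sharp coefficient bounds of the
class `G_{k,H}(α,1)`: with `h(z) = z + ∑_{n≥2} aₙ zⁿ`, `g(z) = ∑_{n≥2} bₙ zⁿ`,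
`|f| < M`, and `|aₙ| + |bₙ| ≤ 2/(1 + (n-1)α)` for `n ≥ 2`, if `ρ₃ ∈ (0,1)` is
a root of `π/(4M) - ∑_{n≥2} 2n r^{n-1}/(1 + (n-1)α) = 0`, then
`f = h + conj g` is injective on `D_{ρ₃}`. -/
theorem landau_GkHa_univalence (M α : ℝ) (hM : 0 < M) (hα : 0 ≤ α)
    (h g : ℂ → ℂ) (a b : ℕ → ℂ)
    (hhsum : ∀ z ∈ Metric.ball (0:ℂ) 1, HasSum (fun n : ℕ => a n * z ^ n) (h z))
    (hgsum : ∀ z ∈ Metric.ball (0:ℂ) 1, HasSum (fun n : ℕ => b n * z ^ n) (g z))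
    (ha0 : a 0 = 0) (ha1 : a 1 = 1) (hb0 : b 0 = 0) (hb1 : b 1 = 0)
    (hcoef : ∀ n : ℕ, 2 ≤ n →
      ‖a n‖ + ‖b n‖ ≤ 2 / (1 + ((n : ℝ) - 1) * α))
    (hbound : ∀ z ∈ Metric.ball (0:ℂ) 1,
      ‖h z + starRingEnd ℂ (g z)‖ < M)
    (ρ₃ : ℝ) (hρ₃ : ρ₃ ∈ Set.Ioo (0:ℝ) 1)
    (hroot : Real.pi / (4 * M)
        - ∑' n : ℕ, 2 * ((n : ℝ) + 2) * ρ₃ ^ (n + 1) / (1 + ((n : ℝ) + 1) * α) = 0) :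
    Set.InjOn (fun z => h z + starRingEnd ℂ (g z)) (Metric.ball 0 ρ₃) := by
  obtain ⟨hρ0, hρ1⟩ := hρ₃
  have pi_pos := Real.pi_pos
  -- denominators
  have hden : ∀ n : ℕ, (0:ℝ) < 1 + ((n:ℝ) + 1) * α := by
    intro n
    have : (0:ℝ) ≤ ((n:ℝ) + 1) * α := by positivity
    linarith
  have hden1 : ∀ n : ℕ, (1:ℝ) ≤ 1 + ((n:ℝ) + 1) * α := by
    intro n
    have : (0:ℝ) ≤ ((n:ℝ) + 1) * α := by positivity
    linarith
  -- coefficient bound by 2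
  have hcb : ∀ n : ℕ, ‖a n‖ + ‖b n‖ ≤ 2 := by
    intro n
    match n with
    | 0 => simp [ha0, hb0]
    | 1 => norm_num [ha1, hb1]
    | (k+2) =>
      refine le_trans (hcoef (k+2) (by omega)) ?_
      have h1 : (1:ℝ) ≤ 1 + (((k+2:ℕ):ℝ) - 1) * α := by
        have : (0:ℝ) ≤ (((k+2:ℕ):ℝ) - 1) * α := by
          apply mul_nonneg _ hα
          push_cast; linarith [Nat.cast_nonneg (α := ℝ) k]
        linarith
      calc 2 / (1 + (((k+2:ℕ):ℝ) - 1) * α) ≤ 2 / 1 := by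
            apply div_le_div_of_nonneg_left (by norm_num) one_pos h1
        _ = 2 := by norm_num
  have hM1 : (1:ℝ) ≤ M := M_ge_one M hM h g a b hhsum hgsum ha1 hb1 hcb hbound
  -- the coefficient sequence
  set c : ℕ → ℝ := fun n => 2 * ((n:ℝ) + 2) / (1 + ((n:ℝ) + 1) * α) with hcdef
  have hc_nonneg : ∀ n, 0 ≤ c n := by
    intro n
    apply div_nonneg (by positivity) (hden n).le
  have hc0pos : 0 < c 0 := by
    apply div_pos (by norm_num) (hden 0)
  have hc_le : ∀ n, c n ≤ 2 * ((n:ℝ) + 2) := by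
    intro n
    rw [hcdef]
    calc 2 * ((n:ℝ) + 2) / (1 + ((n:ℝ) + 1) * α) ≤ 2 * ((n:ℝ) + 2) / 1 := by
          apply div_le_div_of_nonneg_left (by positivity) one_pos (hden1 n)
      _ = 2 * ((n:ℝ) + 2) := by norm_num
  -- summability of the majorant series for any 0 ≤ r < 1
  have hTsummable : ∀ r : ℝ, 0 ≤ r → r < 1 → Summable (fun n : ℕ => c n * r ^ (n + 1)) := by
    intro r hr0 hr1
    have hnorm : ‖r‖ < 1 := by rwa [Real.norm_eq_abs, _root_.abs_of_nonneg hr0]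
    have s1 : Summable (fun n : ℕ => (n:ℝ) ^ 1 * r ^ n) :=
      summable_pow_mul_geometric_of_norm_lt_one 1 hnorm
    have s2 : Summable (fun n : ℕ => r ^ n) := summable_geometric_of_lt_one hr0 hr1
    have s3 : Summable (fun n : ℕ => 2 * ((n:ℝ) + 2) * r ^ (n + 1)) := by
      have := ((s1.mul_left (2*r)).add (s2.mul_left (4*r)))
      apply this.congr
      intro n
      push_cast
      ring
    apply Summable.of_nonneg_of_le (fun n => by positivity) _ s3
    intro n
    apply mul_le_mul_of_nonneg_right (hc_le n) (by positivity)
  -- the root equation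
  have hT : ∑' n : ℕ, c n * ρ₃ ^ (n + 1) = Real.pi / (4 * M) := by
    have : ∑' n : ℕ, 2 * ((n:ℝ) + 2) * ρ₃ ^ (n + 1) / (1 + ((n:ℝ) + 1) * α)
        = ∑' n : ℕ, c n * ρ₃ ^ (n + 1) := by
      apply tsum_congr
      intro n
      rw [hcdef]
      ring
    rw [← this]
    linarith [hroot]
  have hpilt : Real.pi / (4 * M) < 1 := by
    have h4 : (4:ℝ) ≤ 4 * M := by linarith
    calc Real.pi / (4 * M) ≤ Real.pi / 4 :=
          div_le_div_of_nonneg_left pi_pos.le (by norm_num) h4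
      _ < 1 := by
          have := Real.pi_lt_d2
          linarith
  -- main injectivity argument
  intro z1 hz1 z2 hz2 heq
  by_contra hne
  have hd : z1 - z2 ≠ 0 := sub_ne_zero.mpr hne
  have hdpos : 0 < ‖z1 - z2‖ := norm_pos_iff.mpr hd
  have hz1' : ‖z1‖ < ρ₃ := by
    simpa [Complex.dist_eq] using hz1
  have hz2' : ‖z2‖ < ρ₃ := by
    simpa [Complex.dist_eq] using hz2
  set t : ℝ := max (‖z1‖) (‖z2‖) with htdef
  have ht0 : 0 ≤ t := le_trans (norm_nonneg _) (le_max_left _ _)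
  have htρ : t < ρ₃ := max_lt hz1' hz2'
  have hz1b : z1 ∈ Metric.ball (0:ℂ) 1 := by
    simp only [Metric.mem_ball, dist_zero_right]
    linarith
  have hz2b : z2 ∈ Metric.ball (0:ℂ) 1 := by
    simp only [Metric.mem_ball, dist_zero_right]
    linarith
  set F : ℕ → ℂ :=
    fun m => a m * (z1 ^ m - z2 ^ m) + (starRingEnd ℂ) (b m * (z1 ^ m - z2 ^ m)) with hFdef
  -- F sums to 0
  have HF0 : HasSum F 0 := by
    have h1 : HasSum (fun n : ℕ => a n * (z1 ^ n - z2 ^ n)) (h z1 - h z2) := by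
      have := (hhsum z1 hz1b).sub (hhsum z2 hz2b)
      apply this.congr_fun
      intro n
      ring
    have h2 : HasSum (fun n : ℕ => b n * (z1 ^ n - z2 ^ n)) (g z1 - g z2) := by
      have := (hgsum z1 hz1b).sub (hgsum z2 hz2b)
      apply this.congr_fun
      intro n
      ring
    have h3 := h2.map (starRingEnd ℂ) continuous_star
    have h4 := h1.add h3
    have : (h z1 - h z2) + (starRingEnd ℂ) (g z1 - g z2) = 0 := by
      have heq' : h z1 + (starRingEnd ℂ) (g z1) = h z2 + (starRingEnd ℂ) (g z2) := heq
      rw [map_sub]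
      linear_combination heq'
    rwa [this] at h4
  -- range 2 sum
  have hrange : ∑ i ∈ Finset.range 2, F i = z1 - z2 := by
    rw [Finset.sum_range_succ, Finset.sum_range_one]
    simp [hFdef, ha0, ha1, hb0, hb1]
  have Htail : HasSum (fun n : ℕ => F (n + 2)) (-(z1 - z2)) := by
    apply (hasSum_nat_add_iff (f := F) 2).mpr
    rw [hrange]
    simpa using HF0
  -- norm bound of the tail terms
  have hFb : ∀ n : ℕ, ‖F (n + 2)‖ ≤ c n * t ^ (n + 1) * ‖z1 - z2‖ := by
    intro n
    have hp := pow_sub_pow_norm_le z1 z2 t (le_max_left _ _) (le_max_right _ _) (n + 2)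
    have hp' : ‖z1 ^ (n+2) - z2 ^ (n+2)‖
        ≤ ((n:ℝ) + 2) * t ^ (n + 1) * ‖z1 - z2‖ := by
      have : ((n + 2 : ℕ) : ℝ) = (n:ℝ) + 2 := by push_cast; ring
      simpa [this] using hp
    have habs : ‖F (n+2)‖ ≤ (‖a (n+2)‖ + ‖b (n+2)‖)
        * ‖z1 ^ (n+2) - z2 ^ (n+2)‖ := by
      simp only [hFdef]
      calc ‖a (n+2) * (z1 ^ (n+2) - z2 ^ (n+2))
            + (starRingEnd ℂ) (b (n+2) * (z1 ^ (n+2) - z2 ^ (n+2)))‖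
          ≤ ‖a (n+2) * (z1 ^ (n+2) - z2 ^ (n+2))‖
            + ‖(starRingEnd ℂ) (b (n+2) * (z1 ^ (n+2) - z2 ^ (n+2)))‖ :=
            norm_add_le _ _
        _ = (‖a (n+2)‖ + ‖b (n+2)‖)
            * ‖z1 ^ (n+2) - z2 ^ (n+2)‖ := by
            rw [norm_mul, Complex.norm_conj, norm_mul]
            ring
    have hco := hcoef (n+2) (by omega)
    have hco' : ‖a (n+2)‖ + ‖b (n+2)‖
        ≤ 2 / (1 + ((n:ℝ) + 1) * α) := by
      have : (((n+2:ℕ):ℝ) - 1) = (n:ℝ) + 1 := by push_cast; ring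
      rwa [this] at hco
    calc ‖F (n+2)‖ ≤ (‖a (n+2)‖ + ‖b (n+2)‖)
            * ‖z1 ^ (n+2) - z2 ^ (n+2)‖ := habs
      _ ≤ (2 / (1 + ((n:ℝ) + 1) * α)) * (((n:ℝ) + 2) * t ^ (n+1) * ‖z1 - z2‖) := by
          apply mul_le_mul hco' hp' (norm_nonneg _)
          positivity
      _ = c n * t ^ (n + 1) * ‖z1 - z2‖ := by
          rw [hcdef]
          ring
  -- summability of norms
  have hsumb : Summable (fun n : ℕ => c n * t ^ (n + 1) * ‖z1 - z2‖) :=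
    (hTsummable t ht0 (lt_trans htρ hρ1)).mul_right _
  have hsumF : Summable (fun n : ℕ => ‖F (n + 2)‖) :=
    Summable.of_nonneg_of_le (fun n => norm_nonneg _) hFb hsumb
  -- the contradiction
  have hkey : ‖z1 - z2‖ ≤ ∑' n : ℕ, ‖F (n + 2)‖ := by
    have h1 : ‖∑' n : ℕ, F (n + 2)‖ ≤ ∑' n : ℕ, ‖F (n + 2)‖ := norm_tsum_le_tsum_norm hsumF
    rw [Htail.tsum_eq, norm_neg] at h1
    exact h1
  have h2 : ∑' n : ℕ, ‖F (n + 2)‖ ≤ (∑' n : ℕ, c n * t ^ (n + 1)) * ‖z1 - z2‖ := by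
    rw [← tsum_mul_right]
    exact Summable.tsum_le_tsum hFb hsumF hsumb
  have h3 : (∑' n : ℕ, c n * t ^ (n + 1)) < ∑' n : ℕ, c n * ρ₃ ^ (n + 1) := by
    apply Summable.tsum_lt_tsum_of_nonneg (i := 0)
    · intro n; positivity
    · intro n
      apply mul_le_mul_of_nonneg_left _ (hc_nonneg n)
      exact pow_le_pow_left₀ ht0 htρ.le _
    · apply mul_lt_mul_of_pos_left _ hc0pos
      simpa using pow_lt_pow_left₀ htρ ht0 (by norm_num : (1:ℕ) ≠ 0)
    · exact hTsummable ρ₃ hρ0.le hρ1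
  rw [hT] at h3
  nlinarith [hkey, h2, h3, hpilt, hdpos]
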